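/- Let Γ be a finitely generated group and γ_1, γ_2 ∈ Γ. Then the following are equivalent: (i) γ_1 and γ_2 induce the same measure on every finite group, i.e., for every finite group G and every g ∈ G, the number of homomorphisms φ : Γ → G with φ(γ_1) = g equals the number with φ(γ_2) = g; (ii) for every finite group G, writing K = K_Γ(G), there is an automorphism of Γ/K mapping γ_1K to γ_2K. -/

import Mathlib

/-- `Kgrp Γ G` is the intersection of all normal subgroups `N ◁ Γ` with `Γ/N ≅ G`
(equivalently, of the kernels of all surjective homomorphisms `Γ →* G`); it equals
`Γ` if `G` is not a quotient of `Γ`. -/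
def Kgrp (Γ : Type) [Group Γ] (G : Type) [Group G] : Subgroup Γ :=
  ⨅ (φ : Γ →* G) (_ : Function.Surjective φ), φ.ker

instance Kgrp_normal (Γ : Type) [Group Γ] (G : Type) [Group G] : (Kgrp Γ G).Normal := by
  constructor
  intro n hn g
  simp only [Kgrp, Subgroup.mem_iInf] at hn ⊢
  intro φ hφ
  have h1 := hn φ hφ
  simp only [MonoidHom.mem_ker] at h1 ⊢
  simp [map_mul, h1]

section Auxiliary

variable {Γ : Type} [Group Γ]

/-- A finitely generated group admits only finitely many homomorphisms into a
finite group. -/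
lemma finite_monoidHom [Group.FG Γ] (G : Type) [Group G] [Finite G] :
    Finite (Γ →* G) := by
  obtain ⟨S, hS, hfin⟩ := Group.fg_iff.mp ‹Group.FG Γ›
  haveI : Finite S := hfin
  have hinj : Function.Injective (fun (φ : Γ →* G) => (fun s : S => φ s)) := by
    intro f g h
    refine MonoidHom.eq_of_eqOn_dense hS ?_
    intro x hx
    exact congrFun h ⟨x, hx⟩
  exact Finite.of_injective _ hinj

/-- A proper subgroup of a finite group has strictly smaller cardinality. -/
lemma card_subgroup_lt {G : Type} [Group G] [Finite G] {H : Subgroup G} (h : H ≠ ⊤) :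
    Nat.card H < Nat.card G := by
  have h1 : Nat.card H = (H : Set G).ncard := (Nat.card_coe_set_eq _)
  rw [h1, ← Set.ncard_univ]
  exact Set.ncard_lt_ncard (Set.ssubset_univ_iff.mpr (by simpa using h)) Set.finite_univ

/-- Fiberwise equivalence: homs with range `H` correspond to surjections onto `H`. -/
def fiberEquiv (G : Type) [Group G] (γ : Γ) (g : G) (H : Subgroup G) :
    {a : {φ : Γ →* G // φ γ = g} // a.1.range = H} ≃
      {ψ : Γ →* H // Function.Surjective ψ ∧ (ψ γ : G) = g} where
  toFun a :=
    ⟨(a.1.1.codRestrict H (fun x => le_of_eq a.2 ⟨x, rfl⟩)),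
      by
        constructor
        · rintro ⟨y, hy⟩
          rw [← a.2] at hy
          obtain ⟨x, hx⟩ := hy
          exact ⟨x, Subtype.ext hx⟩
        · exact a.1.2⟩
  invFun ψ :=
    ⟨⟨H.subtype.comp ψ.1, ψ.2.2⟩, by
      ext y
      constructor
      · rintro ⟨x, rfl⟩; exact (ψ.1 x).2
      · intro hy
        obtain ⟨x, hx⟩ := ψ.2.1 ⟨y, hy⟩
        exact ⟨x, by rw [MonoidHom.comp_apply, hx]; rfl⟩⟩
  left_inv a := by
    apply Subtype.ext; apply Subtype.ext; rfl
  right_inv ψ := by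
    apply Subtype.ext; apply MonoidHom.ext; intro x; apply Subtype.ext; rfl

/-- The count of homomorphisms hitting a prescribed value decomposes as a sum over
subgroups of counts of surjections. -/
lemma homCount_eq_sum [Group.FG Γ] (G : Type) [Group G] [Finite G]
    [Fintype (Subgroup G)] (γ : Γ) (g : G) :
    Nat.card {φ : Γ →* G // φ γ = g} =
      ∑ H : Subgroup G,
        Nat.card {ψ : Γ →* H // Function.Surjective ψ ∧ (ψ γ : G) = g} := by
  classical
  haveI : Finite (Γ →* G) := finite_monoidHom G
  haveI : ∀ H : Subgroup G, Finite (Γ →* H) := fun H => finite_monoidHom H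
  have e : {φ : Γ →* G // φ γ = g} ≃
      Σ H : Subgroup G, {ψ : Γ →* H // Function.Surjective ψ ∧ (ψ γ : G) = g} :=
    (Equiv.sigmaFiberEquiv (fun a : {φ : Γ →* G // φ γ = g} => a.1.range)).symm.trans
      (Equiv.sigmaCongrRight (fun H => fiberEquiv G γ g H))
  rw [Nat.card_congr e]
  haveI : ∀ H : Subgroup G,
      Fintype {ψ : Γ →* H // Function.Surjective ψ ∧ (ψ γ : G) = g} :=
    fun H => Fintype.ofFinite _
  rw [Nat.card_eq_fintype_card, Fintype.card_sigma]
  simp [Nat.card_eq_fintype_card]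

/-- Surjections onto `⊤` correspond to surjections onto `G`. -/
def topSurEquiv (G : Type) [Group G] (γ : Γ) (g : G) :
    {ψ : Γ →* (⊤ : Subgroup G) // Function.Surjective ψ ∧ (ψ γ : G) = g} ≃
      {φ : Γ →* G // Function.Surjective φ ∧ φ γ = g} where
  toFun ψ :=
    ⟨(⊤ : Subgroup G).subtype.comp ψ.1,
      fun y => (ψ.2.1 ⟨y, trivial⟩).imp (fun x hx => by rw [MonoidHom.comp_apply, hx]; rfl),
      ψ.2.2⟩
  invFun φ :=
    ⟨φ.1.codRestrict ⊤ (fun _ => trivial),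
      fun y => (φ.2.1 y.1).imp (fun x hx => Subtype.ext hx),
      φ.2.2⟩
  left_inv ψ := by
    apply Subtype.ext; apply MonoidHom.ext; intro x; apply Subtype.ext; rfl
  right_inv φ := by
    apply Subtype.ext; apply MonoidHom.ext; intro x; rfl

/-- If `g ∈ H`, the coerced condition equals the exact condition. -/
lemma surCond_equiv (G : Type) [Group G] (γ : Γ) (g : G) (H : Subgroup G) (hg : g ∈ H) :
    Nat.card {ψ : Γ →* H // Function.Surjective ψ ∧ (ψ γ : G) = g} =
      Nat.card {ψ : Γ →* H // Function.Surjective ψ ∧ ψ γ = ⟨g, hg⟩} := by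
  apply Nat.card_congr
  apply Equiv.subtypeEquivRight
  intro ψ
  exact and_congr_right fun _ => ⟨fun h => Subtype.ext h, fun h => congrArg Subtype.val h⟩

lemma surCond_empty (G : Type) [Group G] (γ : Γ) (g : G) (H : Subgroup G) (hg : g ∉ H) :
    Nat.card {ψ : Γ →* H // Function.Surjective ψ ∧ (ψ γ : G) = g} = 0 := by
  have : IsEmpty {ψ : Γ →* H // Function.Surjective ψ ∧ (ψ γ : G) = g} :=
    ⟨fun ψ => hg (ψ.2.2 ▸ (ψ.1 γ).2)⟩
  exact Nat.card_of_isEmpty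

/-- Equality of hom-measures implies equality of surjection-measures, by induction on
the order of the target group. -/
lemma sur_eq_of_hom_eq [Group.FG Γ] {γ₁ γ₂ : Γ}
    (hyp : ∀ (G : Type) [Group G] [Finite G] (g : G),
      Nat.card {φ : Γ →* G // φ γ₁ = g} = Nat.card {φ : Γ →* G // φ γ₂ = g})
    (G : Type) [Group G] [Finite G] (g : G) :
    Nat.card {φ : Γ →* G // Function.Surjective φ ∧ φ γ₁ = g} =
      Nat.card {φ : Γ →* G // Function.Surjective φ ∧ φ γ₂ = g} := by
  have main : ∀ n : ℕ, ∀ (G : Type) [Group G] [Finite G], Nat.card G ≤ n → ∀ g : G,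
      Nat.card {φ : Γ →* G // Function.Surjective φ ∧ φ γ₁ = g} =
        Nat.card {φ : Γ →* G // Function.Surjective φ ∧ φ γ₂ = g} := by
    intro n
    induction n with
    | zero =>
      intro G _ _ hle g
      exact absurd hle (by simpa using Nat.card_pos.ne')
    | succ n ih =>
      intro G _ _ hle g
      classical
      haveI := Fintype.ofFinite (Subgroup G)
      have hterm : ∀ H : Subgroup G, H ≠ ⊤ →
          Nat.card {ψ : Γ →* H // Function.Surjective ψ ∧ (ψ γ₁ : G) = g} =
            Nat.card {ψ : Γ →* H // Function.Surjective ψ ∧ (ψ γ₂ : G) = g} := by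
        intro H hH
        by_cases hg : g ∈ H
        · rw [surCond_equiv G γ₁ g H hg, surCond_equiv G γ₂ g H hg]
          exact ih H (by have := card_subgroup_lt hH; omega) ⟨g, hg⟩
        · rw [surCond_empty G γ₁ g H hg, surCond_empty G γ₂ g H hg]
      have hsum : ∑ H : Subgroup G,
            Nat.card {ψ : Γ →* H // Function.Surjective ψ ∧ (ψ γ₁ : G) = g} =
          ∑ H : Subgroup G,
            Nat.card {ψ : Γ →* H // Function.Surjective ψ ∧ (ψ γ₂ : G) = g} := by
        rw [← homCount_eq_sum, ← homCount_eq_sum]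
        exact hyp G g
      have htop : Nat.card {ψ : Γ →* (⊤ : Subgroup G) //
            Function.Surjective ψ ∧ (ψ γ₁ : G) = g} =
          Nat.card {ψ : Γ →* (⊤ : Subgroup G) //
            Function.Surjective ψ ∧ (ψ γ₂ : G) = g} := by
        have h1 := Finset.add_sum_erase Finset.univ
          (fun H : Subgroup G =>
            Nat.card {ψ : Γ →* H // Function.Surjective ψ ∧ (ψ γ₁ : G) = g})
          (Finset.mem_univ ⊤)
        have h2 := Finset.add_sum_erase Finset.univ
          (fun H : Subgroup G =>
            Nat.card {ψ : Γ →* H // Function.Surjective ψ ∧ (ψ γ₂ : G) = g})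
          (Finset.mem_univ ⊤)
        have h3 : ∑ H ∈ Finset.univ.erase (⊤ : Subgroup G),
              Nat.card {ψ : Γ →* H // Function.Surjective ψ ∧ (ψ γ₁ : G) = g} =
            ∑ H ∈ Finset.univ.erase (⊤ : Subgroup G),
              Nat.card {ψ : Γ →* H // Function.Surjective ψ ∧ (ψ γ₂ : G) = g} :=
          Finset.sum_congr rfl fun H hH => hterm H (Finset.ne_of_mem_erase hH)
        rw [← h1, ← h2, h3] at hsum
        exact Nat.add_right_cancel hsum
      rw [← Nat.card_congr (topSurEquiv G γ₁ g), ← Nat.card_congr (topSurEquiv G γ₂ g)]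
      exact htop
  exact main (Nat.card G) G le_rfl g

/-- Equality of surjection-measures implies equality of hom-measures. -/
lemma hom_eq_of_sur_eq [Group.FG Γ] {γ₁ γ₂ : Γ}
    (hyp : ∀ (G : Type) [Group G] [Finite G] (g : G),
      Nat.card {φ : Γ →* G // Function.Surjective φ ∧ φ γ₁ = g} =
        Nat.card {φ : Γ →* G // Function.Surjective φ ∧ φ γ₂ = g})
    (G : Type) [Group G] [Finite G] (g : G) :
    Nat.card {φ : Γ →* G // φ γ₁ = g} = Nat.card {φ : Γ →* G // φ γ₂ = g} := by
  classical
  haveI := Fintype.ofFinite (Subgroup G)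
  rw [homCount_eq_sum G γ₁ g, homCount_eq_sum G γ₂ g]
  refine Finset.sum_congr rfl fun H _ => ?_
  by_cases hg : g ∈ H
  · rw [surCond_equiv G γ₁ g H hg, surCond_equiv G γ₂ g H hg]
    exact hyp H ⟨g, hg⟩
  · rw [surCond_empty G γ₁ g H hg, surCond_empty G γ₂ g H hg]

lemma finiteIndex_Kgrp [Group.FG Γ] (G : Type) [Group G] [Finite G] :
    (Kgrp Γ G).FiniteIndex := by
  haveI : Finite (Γ →* G) := finite_monoidHom G
  apply Subgroup.finiteIndex_iInf
  intro φ
  by_cases h : Function.Surjective φ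
  · rw [iInf_pos h]; infer_instance
  · rw [iInf_neg h]; infer_instance

lemma Kgrp_le_ker {G : Type} [Group G] {ψ : Γ →* G} (hψ : Function.Surjective ψ) :
    Kgrp Γ G ≤ ψ.ker := by
  intro x hx
  simp only [Kgrp, Subgroup.mem_iInf] at hx
  exact hx ψ hψ

/-- Every surjection from `Γ` onto the characteristic quotient `Γ ⧸ Kgrp Γ G` has
kernel exactly `Kgrp Γ G`. -/
lemma ker_eq_Kgrp [Group.FG Γ] (G : Type) [Group G] [Finite G]
    (ρ : Γ →* (Γ ⧸ Kgrp Γ G)) (hρ : Function.Surjective ρ) : ρ.ker = Kgrp Γ G := by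
  set K := Kgrp Γ G with hK
  haveI : K.FiniteIndex := finiteIndex_Kgrp G
  have hKle : K ≤ ρ.ker := by
    intro x hx
    obtain ⟨z, hz⟩ := QuotientGroup.mk_surjective (ρ x)
    have hzK : z ∈ K := by
      rw [hK, Kgrp, Subgroup.mem_iInf]
      intro ψ
      rw [Subgroup.mem_iInf]
      intro hψ
      have hψK : K ≤ ψ.ker := Kgrp_le_ker hψ
      set ψ' : (Γ ⧸ K) →* G := QuotientGroup.lift K ψ hψK with hψ'
      have hψ's : Function.Surjective ψ' := by
        intro y
        obtain ⟨w, hw⟩ := hψ y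
        exact ⟨QuotientGroup.mk w, by rw [hψ']; simpa using hw⟩
      have hq : Function.Surjective (ψ'.comp ρ) := hψ's.comp hρ
      have hxker : x ∈ (ψ'.comp ρ).ker := Kgrp_le_ker hq hx
      rw [MonoidHom.mem_ker, MonoidHom.comp_apply, ← hz] at hxker
      simpa [hψ'] using hxker
    rw [MonoidHom.mem_ker, ← hz]
    rwa [QuotientGroup.eq_one_iff]
  have hidx : ρ.ker.index = K.index := by
    rw [Subgroup.index_eq_card, Subgroup.index_eq_card]
    exact Nat.card_congr (QuotientGroup.quotientKerEquivOfSurjective ρ hρ).toEquiv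
  have hrel := Subgroup.relIndex_mul_index hKle
  rw [hidx] at hrel
  have hKne : K.index ≠ 0 := Subgroup.FiniteIndex.index_ne_zero
  have hone : K.relIndex ρ.ker = 1 := by
    rcases Nat.eq_zero_or_pos (K.relIndex ρ.ker) with h | h
    · rw [h, zero_mul] at hrel; exact absurd hrel.symm hKne
    · nlinarith [hrel, Nat.pos_of_ne_zero hKne]
  exact le_antisymm (Subgroup.relIndex_eq_one.mp hone) hKle

/-- Equality of surjection-measures yields the automorphism of the characteristic
quotient. -/
lemma exists_aut_of_sur_eq [Group.FG Γ] {γ₁ γ₂ : Γ}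
    (hyp : ∀ (G : Type) [Group G] [Finite G] (g : G),
      Nat.card {φ : Γ →* G // Function.Surjective φ ∧ φ γ₁ = g} =
        Nat.card {φ : Γ →* G // Function.Surjective φ ∧ φ γ₂ = g})
    (G : Type) [Group G] [Finite G] :
    ∃ θ : MulAut (Γ ⧸ Kgrp Γ G), θ (QuotientGroup.mk γ₁) = QuotientGroup.mk γ₂ := by
  haveI : (Kgrp Γ G).FiniteIndex := finiteIndex_Kgrp G
  haveI : Finite (Γ ⧸ Kgrp Γ G) := Subgroup.finite_quotient_of_finiteIndex
  haveI : Finite (Γ →* (Γ ⧸ Kgrp Γ G)) := finite_monoidHom _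
  have hpos : 0 < Nat.card {φ : Γ →* (Γ ⧸ Kgrp Γ G) //
      Function.Surjective φ ∧ φ γ₂ = QuotientGroup.mk γ₂} := by
    rw [Nat.card_pos_iff]
    exact ⟨⟨⟨QuotientGroup.mk' (Kgrp Γ G), QuotientGroup.mk'_surjective _, rfl⟩⟩,
      Subtype.finite⟩
  rw [← hyp (Γ ⧸ Kgrp Γ G) (QuotientGroup.mk γ₂)] at hpos
  obtain ⟨⟨ρ, hρs, hρv⟩⟩ := Nat.card_pos_iff.mp hpos |>.1
  have hker := ker_eq_Kgrp G ρ hρs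
  refine ⟨((QuotientGroup.quotientMulEquivOfEq hker.symm).trans
    (QuotientGroup.quotientKerEquivOfSurjective ρ hρs) : (Γ ⧸ Kgrp Γ G) ≃* (Γ ⧸ Kgrp Γ G)), ?_⟩
  show (QuotientGroup.quotientKerEquivOfSurjective ρ hρs)
      ((QuotientGroup.quotientMulEquivOfEq hker.symm) (QuotientGroup.mk γ₁)) =
    QuotientGroup.mk γ₂
  rw [QuotientGroup.quotientMulEquivOfEq_mk]
  show QuotientGroup.kerLift ρ (QuotientGroup.mk γ₁) = QuotientGroup.mk γ₂
  rw [QuotientGroup.kerLift_mk]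
  exact hρv

/-- An automorphism of the characteristic quotient carrying `γ₁` to `γ₂` yields
equality of surjection counts. -/
lemma sur_eq_of_aut [Group.FG Γ] {γ₁ γ₂ : Γ}
    (G : Type) [Group G] [Finite G]
    (θ : MulAut (Γ ⧸ Kgrp Γ G)) (hθ : θ (QuotientGroup.mk γ₁) = QuotientGroup.mk γ₂)
    (g : G) :
    Nat.card {φ : Γ →* G // Function.Surjective φ ∧ φ γ₁ = g} =
      Nat.card {φ : Γ →* G // Function.Surjective φ ∧ φ γ₂ = g} := by
  set K := Kgrp Γ G with hK
  have lift_surj : ∀ (ψ : Γ →* G) (hψ : Function.Surjective ψ),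
      Function.Surjective (QuotientGroup.lift K ψ (Kgrp_le_ker hψ)) := by
    intro ψ hψ y
    obtain ⟨w, hw⟩ := hψ y
    exact ⟨QuotientGroup.mk w, by simpa using hw⟩
  have key : ∀ (θ : MulAut (Γ ⧸ K)) (ψ : Γ →* G) (hψ : Function.Surjective ψ),
      Function.Surjective
        (((QuotientGroup.lift K ψ (Kgrp_le_ker hψ)).comp θ.toMonoidHom).comp
          (QuotientGroup.mk' K)) := by
    intro θ ψ hψ
    exact ((lift_surj ψ hψ).comp θ.surjective).comp (QuotientGroup.mk'_surjective K)
  let F : ∀ (θ : MulAut (Γ ⧸ K)),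
      {φ : Γ →* G // Function.Surjective φ} → {φ : Γ →* G // Function.Surjective φ} :=
    fun θ φ => ⟨((QuotientGroup.lift K φ.1 (Kgrp_le_ker φ.2)).comp θ.toMonoidHom).comp
        (QuotientGroup.mk' K), key θ φ.1 φ.2⟩
  have hFF : ∀ (θ : MulAut (Γ ⧸ K)) (φ : {φ : Γ →* G // Function.Surjective φ}),
      F θ⁻¹ (F θ φ) = φ := by
    intro θ φ
    apply Subtype.ext
    apply MonoidHom.ext
    intro x
    show QuotientGroup.lift K (F θ φ).1 (Kgrp_le_ker (F θ φ).2)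
      (θ⁻¹.toMonoidHom (QuotientGroup.mk x)) = φ.1 x
    obtain ⟨y, hy⟩ := QuotientGroup.mk_surjective (θ⁻¹.toMonoidHom (QuotientGroup.mk x))
    rw [← hy, QuotientGroup.lift_mk']
    show QuotientGroup.lift K φ.1 (Kgrp_le_ker φ.2)
      (θ.toMonoidHom (QuotientGroup.mk y)) = φ.1 x
    have : θ.toMonoidHom (QuotientGroup.mk y) = QuotientGroup.mk x := by
      have := congrArg θ hy
      simpa using this
    rw [this, QuotientGroup.lift_mk']
  have hval : ∀ (φ : Γ →* G) (hφ : Function.Surjective φ), φ γ₁ = g →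
      ((F θ⁻¹ ⟨φ, hφ⟩ : {φ : Γ →* G // Function.Surjective φ}) : Γ →* G) γ₂ = g := by
    intro φ hφ hv
    show QuotientGroup.lift K φ (Kgrp_le_ker hφ) (θ⁻¹.toMonoidHom (QuotientGroup.mk γ₂)) = g
    have h2 : θ⁻¹.toMonoidHom (QuotientGroup.mk γ₂) = QuotientGroup.mk γ₁ := by
      rw [← hθ]; simp
    rw [h2, QuotientGroup.lift_mk']
    exact hv
  have hval' : ∀ (φ : Γ →* G) (hφ : Function.Surjective φ), φ γ₂ = g →
      ((F θ ⟨φ, hφ⟩ : {φ : Γ →* G // Function.Surjective φ}) : Γ →* G) γ₁ = g := by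
    intro φ hφ hv
    show QuotientGroup.lift K φ (Kgrp_le_ker hφ) (θ.toMonoidHom (QuotientGroup.mk γ₁)) = g
    have h2 : θ.toMonoidHom (QuotientGroup.mk γ₁) = QuotientGroup.mk γ₂ := hθ
    rw [h2, QuotientGroup.lift_mk']
    exact hv
  apply Nat.card_congr
  refine
    { toFun := fun φ => ⟨(F θ⁻¹ ⟨φ.1, φ.2.1⟩).1, (F θ⁻¹ ⟨φ.1, φ.2.1⟩).2,
        hval φ.1 φ.2.1 φ.2.2⟩
      invFun := fun φ => ⟨(F θ ⟨φ.1, φ.2.1⟩).1, (F θ ⟨φ.1, φ.2.1⟩).2,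
        hval' φ.1 φ.2.1 φ.2.2⟩
      left_inv := ?_
      right_inv := ?_ }
  · intro φ
    have h := hFF θ⁻¹ ⟨φ.1, φ.2.1⟩
    rw [inv_inv] at h
    refine Subtype.val_injective ?_
    show (F θ (F θ⁻¹ ⟨φ.1, φ.2.1⟩)).1 = φ.1
    exact congrArg Subtype.val h
  · intro φ
    refine Subtype.val_injective ?_
    show (F θ⁻¹ (F θ ⟨φ.1, φ.2.1⟩)).1 = φ.1
    exact congrArg Subtype.val (hFF θ ⟨φ.1, φ.2.1⟩)

end Auxiliary

/-- Let `Γ` be a finitely generated group and `γ₁, γ₂ ∈ Γ`.  The following are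
equivalent: (i) `γ₁` and `γ₂` induce the same measure on every finite group; (ii)
for every finite group `G`, with `K = K_Γ(G)`, there is an automorphism of `Γ/K`
mapping `γ₁ K` to `γ₂ K`. -/
theorem sameMeasure_iff_autEquiv_in_char_quotients
    (Γ : Type) [Group Γ] [Group.FG Γ] (γ₁ γ₂ : Γ) :
    (∀ (G : Type) [Group G] [Finite G] (g : G),
        Nat.card {φ : Γ →* G // φ γ₁ = g} = Nat.card {φ : Γ →* G // φ γ₂ = g}) ↔
    (∀ (G : Type) [Group G] [Finite G],
        ∃ θ : MulAut (Γ ⧸ Kgrp Γ G),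
          θ (QuotientGroup.mk γ₁) = QuotientGroup.mk γ₂) := by
  constructor
  · intro h G _ _
    exact exists_aut_of_sur_eq (sur_eq_of_hom_eq h) G
  · intro h
    apply hom_eq_of_sur_eq
    intro H _ _ h'
    obtain ⟨θ, hθ⟩ := h H
    exact sur_eq_of_aut H θ hθ h'
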